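/- Let T be a continuous linear operator on a separable Fréchet space and (λ_n) a sequence of nonzero complex numbers such that λ_{n+τ}/λ_n → 1 for some τ ≥ 1. If (λ_n T^n) has property P_{\overline{AP}}, then T is multiply recurrent. -/

import Mathlib

open Filter Topology

theorem P_overlineAP_implies_multiplyRecurrent
    {X : Type*} [AddCommGroup X] [Module ℂ X] [UniformSpace X] [IsUniformAddGroup X]
    [ContinuousSMul ℂ X] [Module ℝ X] [IsScalarTower ℝ ℂ X] [LocallyConvexSpace ℝ X] [CompleteSpace X]
    [TopologicalSpace.MetrizableSpace X] [TopologicalSpace.SeparableSpace X]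
    (T : X →L[ℂ] X) (l : ℕ → ℂ) (hl : ∀ n, l n ≠ 0)
    (τ : ℕ) (hτ : 1 ≤ τ)
    (hratio : Tendsto (fun n : ℕ => l (n + τ) / l n) atTop (𝓝 1))
    (hP : ∀ U : Set X, IsOpen U → U.Nonempty → ∃ x : X, ∀ m : ℕ,
        ∃ k : ℕ, 1 ≤ k ∧
          {a : ℕ | ∀ j ≤ m, l (a + j * k) • (T ^ (a + j * k)) x ∈ U}.Infinite) :
    ∀ U : Set X, IsOpen U → U.Nonempty → ∀ m : ℕ,
      ∃ k : ℕ, 1 ≤ k ∧ ∃ x ∈ U, ∀ j ≤ m, (T ^ (j * k)) x ∈ U := by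
  intro U hU hUne m
  obtain ⟨u, hu⟩ := hUne
  -- continuity of scalar multiplication at (1, u)
  have hcont : ContinuousAt (fun p : ℂ × X => p.1 • p.2) (1, u) :=
    continuous_smul.continuousAt
  have hmem : U ∈ 𝓝 ((fun p : ℂ × X => p.1 • p.2) (1, u)) := by
    simpa using hU.mem_nhds hu
  have hpre := hcont.preimage_mem_nhds hmem
  rw [mem_nhds_prod_iff] at hpre
  obtain ⟨s, hs, t, ht, hst⟩ := hpre
  obtain ⟨ε, hε, hball⟩ := Metric.mem_nhds_iff.1 hs
  set W := interior t with hWdef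
  have hWopen : IsOpen W := isOpen_interior
  have huW : u ∈ W := mem_interior_iff_mem_nhds.2 ht
  obtain ⟨x, hx⟩ := hP W hWopen ⟨u, huW⟩
  obtain ⟨k, hk1, hInf⟩ := hx (m * τ)
  refine ⟨k * τ, le_trans hk1 (Nat.le_mul_of_pos_right k hτ), ?_⟩
  -- ratio along multiples of τ tends to 1
  have hrat : ∀ q : ℕ, Tendsto (fun a => l (a + q * τ) / l a) atTop (𝓝 1) := by
    intro q
    induction q with
    | zero =>
      refine (tendsto_const_nhds : Tendsto (fun _ : ℕ => (1:ℂ)) atTop (𝓝 1)).congr fun a => ?_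
      simp [div_self (hl a)]
    | succ n ih =>
      have h1 : Tendsto (fun a : ℕ => l (a + n * τ + τ) / l (a + n * τ)) atTop (𝓝 1) :=
        hratio.comp (tendsto_add_atTop_nat (n * τ))
      have h2 := h1.mul ih
      rw [one_mul] at h2
      refine h2.congr (fun a => ?_)
      have h0 : l (a + n * τ) ≠ 0 := hl _
      have h3 : a + (n + 1) * τ = a + n * τ + τ := by ring
      rw [h3]
      field_simp
  have hinv : ∀ q : ℕ, Tendsto (fun a => l a / l (a + q * τ)) atTop (𝓝 1) := by
    intro q
    have := (hrat q).inv₀ one_ne_zero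
    rw [inv_one] at this
    refine this.congr (fun a => ?_)
    rw [inv_div]
  have hball1 : Metric.ball (1:ℂ) ε ∈ 𝓝 (1:ℂ) := Metric.ball_mem_nhds _ hε
  have hev : ∀ᶠ a in atTop, ∀ j ∈ Finset.range (m + 1),
      l a / l (a + (j * k) * τ) ∈ Metric.ball (1:ℂ) ε := by
    rw [Filter.eventually_all_finset]
    intro j _
    exact (hinv (j * k)) hball1
  obtain ⟨N, hN⟩ := Filter.eventually_atTop.1 hev
  obtain ⟨a, haA, hNa⟩ := hInf.exists_gt N
  have haA' : ∀ j ≤ m * τ, l (a + j * k) • (T ^ (a + j * k)) x ∈ W := haA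
  refine ⟨l a • (T ^ a) x, ?_, ?_⟩
  · -- l a • T^a x ∈ U
    have h0 := haA' 0 (Nat.zero_le _)
    simp only [Nat.zero_mul, Nat.add_zero] at h0
    have h1 : ((1:ℂ), l a • (T ^ a) x) ∈ s ×ˢ t :=
      ⟨hball (Metric.mem_ball_self hε), interior_subset h0⟩
    have := hst h1
    simpa using this
  · intro j hj
    set b := a + j * (k * τ) with hb
    have hTb : (T ^ (j * (k * τ))) (l a • (T ^ a) x) = l a • (T ^ b) x := by
      rw [map_smul]
      congr 1
      rw [← ContinuousLinearMap.mul_apply, ← pow_add, hb, add_comm a (j * (k * τ))]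
    have hmemW : l b • (T ^ b) x ∈ W := by
      have hjτ : j * τ ≤ m * τ := Nat.mul_le_mul_right τ hj
      have := haA' (j * τ) hjτ
      have heq : a + (j * τ) * k = b := by rw [hb]; ring
      rwa [heq] at this
    have hsc : l a / l b ∈ s := by
      have hbeq : b = a + (j * k) * τ := by rw [hb]; ring
      have := hN a (le_of_lt hNa) j (Finset.mem_range.2 (Nat.lt_succ_of_le hj))
      rw [← hbeq] at this
      exact hball this
    have h1 : ((l a / l b), l b • (T ^ b) x) ∈ s ×ˢ t := ⟨hsc, interior_subset hmemW⟩
    have h2 := hst h1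
    have h3 : (l a / l b) • (l b • (T ^ b) x) = l a • (T ^ b) x := by
      rw [smul_smul, div_mul_cancel₀ _ (hl b)]
    rw [hTb]
    rw [← h3]
    exact h2
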